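/- For every n ≥ 1, the level-n Hanoi Schreier graph Γ_n satisfies ρ_{2/3}(Γ_n) ≥ 1/2: every subset A ⊆ V_n with 3|A| ≥ 2·3^n has 2·δ(A) ≥ δ(Γ_n), where δ(A) = max_{x,y∈A} d(x,y) and δ(Γ_n) is the diameter of Γ_n. -/

import Mathlib

noncomputable section

/-- The generator `a_{(ij)}` of the Hanoi Towers group acting on finite ternary words:
`a_{(ij)}(iw) = jw`, `a_{(ij)}(jw) = iw`, and `a_{(ij)}(kw) = k·a_{(ij)}(w)` for
`k ∉ {i,j}`. -/
def hanoiMove (i j : Fin 3) : List (Fin 3) → List (Fin 3)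
  | [] => []
  | x :: w => if x = i then j :: w else if x = j then i :: w else x :: hanoiMove i j w

/-- The level-`n` Hanoi Schreier graph `Γ_n`: vertices are ternary words of length `n`, and
distinct `x, y` are adjacent iff `y ∈ {a(x), b(x), c(x)}` with `a = a_{(01)}`, `b = a_{(02)}`,
`c = a_{(12)}` (the relation is symmetrized; since the generators are involutions this is the
same relation). -/
def hanoiGraph (n : ℕ) : SimpleGraph (List.Vector (Fin 3) n) where
  Adj x y := x ≠ y ∧ ∃ s ∈ [hanoiMove 0 1, hanoiMove 0 2, hanoiMove 1 2],
    s x.toList = y.toList ∨ s y.toList = x.toList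
  symm := ⟨by
    rintro x y ⟨h1, s, hs, h2⟩
    exact ⟨h1.symm, s, hs, h2.symm⟩⟩
  loopless := ⟨fun x h => h.1 rfl⟩

/-- the third peg -/
def thd (t q : Fin 3) : Fin 3 := -(t+q)

/-- cost-to-corner function, word given most-significant (largest disk) first -/
def hG : Fin 3 → List (Fin 3) → ℕ
  | _, [] => 0
  | q, t :: w => if t = q then hG q w else 2 ^ w.length + hG (thd t q) w

/-- evolved target -/
def htgt : Fin 3 → List (Fin 3) → Fin 3
  | q, [] => q
  | q, t :: w => if t = q then htgt q w else htgt (thd t q) w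

lemma hG_lt (w : List (Fin 3)) : ∀ q, hG q w < 2 ^ w.length := by
  induction w with
  | nil => intro q; simp [hG]
  | cons t w ih =>
    intro q
    simp only [hG, List.length_cons, pow_succ]
    split
    · exact lt_of_lt_of_le (ih q) (by nlinarith [Nat.one_le_two_pow (n := w.length)])
    · have := ih (thd t q); omega

lemma hG_append (v : List (Fin 3)) : ∀ (X : List (Fin 3)) (q : Fin 3),
    hG q (v ++ X) = 2 ^ X.length * hG q v + hG (htgt q v) X := by
  induction v with
  | nil => intro X q; simp [hG, htgt]
  | cons t v ih =>
    intro X q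
    simp only [List.cons_append, hG, htgt, List.append_eq, List.length_append]
    split
    · exact ih X q
    · rw [ih X (thd t q)]; ring

lemma thd_ne (i j : Fin 3) (h : i ≠ j) : thd i j ≠ i ∧ thd i j ≠ j := by
  revert h; revert i j; decide

lemma hG_replicate (m : ℕ) (k : Fin 3) : ∀ q, q ≠ k → hG q (List.replicate m k) = 2 ^ m - 1 := by
  induction m with
  | zero => intro q _; simp [hG]
  | succ m ih =>
    intro q hq
    have h1 : k ≠ q := fun h => hq h.symm
    have h2 : thd k q ≠ k := (thd_ne k q h1).1
    simp only [List.replicate_succ, hG, if_neg h1, List.length_replicate, ih (thd k q) h2]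
    have : (1:ℕ) ≤ 2 ^ m := Nat.one_le_two_pow
    rw [pow_succ]; omega

lemma hG_replicate_self (m : ℕ) (k : Fin 3) : hG k (List.replicate m k) = 0 := by
  induction m with
  | zero => simp [hG]
  | succ m ih => simpa [List.replicate_succ, hG] using ih

lemma fin3_cases (i j q : Fin 3) (h : i ≠ j) : q = i ∨ q = j ∨ q = thd i j := by
  revert h; revert i j q; decide

lemma thd_thd (i j : Fin 3) (h : i ≠ j) : thd i (thd i j) = j ∧ thd j (thd i j) = i := by
  revert h; revert i j; decide

lemma thd_comm (a b : Fin 3) : thd a b = thd b a := by unfold thd; rw [add_comm]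

lemma hG_headswap (m : ℕ) (i j q : Fin 3) (h : i ≠ j) :
    hG q (i :: List.replicate m (thd i j)) ≤ hG q (j :: List.replicate m (thd i j)) + 1 := by
  have hk := thd_ne i j h
  have h2 : (1:ℕ) ≤ 2 ^ m := Nat.one_le_two_pow
  have hki : i ≠ thd i j := fun hh => hk.1 hh.symm
  have hkj : j ≠ thd i j := fun hh => hk.2 hh.symm
  rcases fin3_cases i j q h with rfl | rfl | rfl
  · rw [hG, if_pos rfl, hG, if_neg (Ne.symm h),
      hG_replicate m (thd q j) q hki, thd_comm j q, hG_replicate_self]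
    simp only [List.length_replicate]
    omega
  · rw [hG, if_neg h, hG, if_pos rfl, hG_replicate_self,
      hG_replicate m (thd i q) q hkj]
    simp only [List.length_replicate]
    omega
  · rw [hG, if_neg hki, hG, if_neg hkj, (thd_thd i j h).1, (thd_thd i j h).2,
      hG_replicate m (thd i j) j hkj, hG_replicate m (thd i j) i hki]
    omega
lemma eq_thd (i j x : Fin 3) (h : i ≠ j) (h1 : x ≠ i) (h2 : x ≠ j) : x = thd i j := by
  revert h h1 h2; revert i j x; decide

lemma hanoiMove_structure (i j : Fin 3) (hij : i ≠ j) : ∀ w : List (Fin 3),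
    hanoiMove i j w = w ∨
    ∃ m u, (w = List.replicate m (thd i j) ++ i :: u ∧
             hanoiMove i j w = List.replicate m (thd i j) ++ j :: u) ∨
           (w = List.replicate m (thd i j) ++ j :: u ∧
             hanoiMove i j w = List.replicate m (thd i j) ++ i :: u) := by
  intro w
  induction w with
  | nil => exact Or.inl rfl
  | cons x w ih =>
    by_cases hxi : x = i
    · subst hxi
      refine Or.inr ⟨0, w, Or.inl ⟨by simp, ?_⟩⟩
      simp [hanoiMove]
    by_cases hxj : x = j
    · subst hxj
      refine Or.inr ⟨0, w, Or.inr ⟨by simp, ?_⟩⟩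
      simp [hanoiMove, if_neg (Ne.symm hij)]
    have hx : x = thd i j := eq_thd i j x hij hxi hxj
    have hmv : hanoiMove i j (x :: w) = x :: hanoiMove i j w := by
      simp [hanoiMove, if_neg hxi, if_neg hxj]
    rcases ih with h | ⟨m, u, ⟨hw, hm⟩ | ⟨hw, hm⟩⟩
    · exact Or.inl (by rw [hmv, h])
    · exact Or.inr ⟨m + 1, u, Or.inl ⟨by rw [hx, List.replicate_succ, List.cons_append, hw],
        by rw [hmv, hx, List.replicate_succ, List.cons_append, hm]⟩⟩
    · exact Or.inr ⟨m + 1, u, Or.inr ⟨by rw [hx, List.replicate_succ, List.cons_append, hw],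
        by rw [hmv, hx, List.replicate_succ, List.cons_append, hm]⟩⟩

lemma rev_rep_cons (m : ℕ) (k t : Fin 3) (u : List (Fin 3)) :
    (List.replicate m k ++ t :: u).reverse = u.reverse ++ (t :: List.replicate m k) := by
  rw [List.reverse_append, List.reverse_cons, List.reverse_replicate, List.append_assoc,
    List.singleton_append]

lemma hG_move_both (i j : Fin 3) (hij : i ≠ j) (w : List (Fin 3)) (q : Fin 3) :
    hG q (hanoiMove i j w).reverse ≤ hG q w.reverse + 1 ∧
    hG q w.reverse ≤ hG q (hanoiMove i j w).reverse + 1 := by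
  rcases hanoiMove_structure i j hij w with h | ⟨m, u, ⟨hw, hm⟩ | ⟨hw, hm⟩⟩
  · rw [h]; omega
  · subst hw; rw [hm, rev_rep_cons, rev_rep_cons, hG_append, hG_append]
    have h1 := hG_headswap m i j (htgt q u.reverse) hij
    have h2 := hG_headswap m j i (htgt q u.reverse) (Ne.symm hij)
    rw [thd_comm j i] at h2
    simp only [List.length_cons, List.length_replicate] at *
    omega
  · subst hw; rw [hm, rev_rep_cons, rev_rep_cons, hG_append, hG_append]
    have h1 := hG_headswap m i j (htgt q u.reverse) hij
    have h2 := hG_headswap m j i (htgt q u.reverse) (Ne.symm hij)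
    rw [thd_comm j i] at h2
    simp only [List.length_cons, List.length_replicate] at *
    omega

lemma hF_adj {n : ℕ} (x y : List.Vector (Fin 3) n) (h : (hanoiGraph n).Adj x y) (q : Fin 3) :
    hG q x.toList.reverse ≤ hG q y.toList.reverse + 1 := by
  obtain ⟨-, s, hs, hxy⟩ := h
  have hij : ∀ i j : Fin 3, i ≠ j → s = hanoiMove i j →
      hG q x.toList.reverse ≤ hG q y.toList.reverse + 1 := by
    intro i j hij hsij
    subst hsij
    rcases hxy with hxy | hxy
    · rw [← hxy]
      exact (hG_move_both i j hij x.toList q).2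
    · rw [← hxy]
      exact (hG_move_both i j hij y.toList q).1
  simp only [List.mem_cons, List.not_mem_nil, or_false] at hs
  rcases hs with rfl | rfl | rfl
  · exact hij 0 1 (by decide) rfl
  · exact hij 0 2 (by decide) rfl
  · exact hij 1 2 (by decide) rfl

lemma hF_walk {n : ℕ} (q : Fin 3) {x y : List.Vector (Fin 3) n}
    (p : (hanoiGraph n).Walk x y) :
    hG q x.toList.reverse ≤ hG q y.toList.reverse + p.length := by
  induction p with
  | nil => simp
  | cons h p ih =>
    have := hF_adj _ _ h q
    simp only [SimpleGraph.Walk.length_cons]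
    omega
lemma hanoiMove_comm (i j : Fin 3) : hanoiMove i j = hanoiMove j i := by
  funext w
  induction w with
  | nil => rfl
  | cons x w ih =>
    by_cases hxi : x = i <;> by_cases hxj : x = j <;>
      simp_all [hanoiMove]

lemma hanoiMove_cases (a b : Fin 3) (h : a ≠ b) :
    hanoiMove a b = hanoiMove 0 1 ∨ hanoiMove a b = hanoiMove 0 2 ∨
      hanoiMove a b = hanoiMove 1 2 := by
  have hc := hanoiMove_comm
  fin_cases a <;> fin_cases b <;>
    first
      | exact absurd rfl h
      | exact Or.inl rfl
      | exact Or.inr (Or.inl rfl)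
      | exact Or.inr (Or.inr rfl)
      | exact Or.inl (hc 1 0)
      | exact Or.inr (Or.inl (hc 2 0))
      | exact Or.inr (Or.inr (hc 2 1))

lemma hanoiMove_rep (a b : Fin 3) (h : a ≠ b) : ∀ (m : ℕ) (u : List (Fin 3)),
    hanoiMove a b (List.replicate m (thd a b) ++ a :: u) =
      List.replicate m (thd a b) ++ b :: u := by
  intro m
  induction m with
  | zero => intro u; simp [hanoiMove]
  | succ m ih =>
    intro u
    have h1 : thd a b ≠ a := (thd_ne a b h).1
    have h2 : thd a b ≠ b := (thd_ne a b h).2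
    simp only [List.replicate_succ, List.cons_append, hanoiMove, List.append_eq, if_neg h1,
      if_neg h2]
    rw [ih u]

lemma hanoi_walk (n : ℕ) : ∀ (m : ℕ) (x y : List.Vector (Fin 3) n),
    x.toList.drop m = y.toList.drop m →
    ∃ p : (hanoiGraph n).Walk x y, p.length ≤ 2 ^ m - 1 := by
  intro m
  induction m with
  | zero =>
    intro x y h
    have : x = y := List.Vector.eq x y (by simpa using h)
    subst this
    exact ⟨SimpleGraph.Walk.nil, by simp⟩
  | succ m ih =>
    intro x y h
    have h2m : (1:ℕ) ≤ 2 ^ m := Nat.one_le_two_pow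
    by_cases hmn : n ≤ m
    · have hx : x.toList.drop m = y.toList.drop m := by
        rw [List.drop_eq_nil_of_le (by simp [hmn]), List.drop_eq_nil_of_le (by simp [hmn])]
      obtain ⟨p, hp⟩ := ih x y hx
      refine ⟨p, le_trans hp (by rw [pow_succ]; omega)⟩
    · push_neg at hmn
      have hmx : m < x.toList.length := by simp [hmn]
      have hmy : m < y.toList.length := by simp [hmn]
      have hdx := List.drop_eq_getElem_cons hmx
      have hdy := List.drop_eq_getElem_cons hmy
      set a := x.toList[m] with ha
      set b := y.toList[m] with hb
      have htail : x.toList.drop (m+1) = y.toList.drop (m+1) := h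
      by_cases hab : a = b
      · refine (ih x y ?_).imp (fun p hp => le_trans hp (by rw [pow_succ]; omega))
        rw [hdx, hdy, htail, hab]
      · set k := thd a b with hk
        have hlen : (List.replicate m k ++ a :: x.toList.drop (m+1)).length = n := by
          simp only [List.length_append, List.length_replicate, List.length_cons,
            List.length_drop, List.Vector.toList_length]
          omega
        have hlen' : (List.replicate m k ++ b :: x.toList.drop (m+1)).length = n := by
          simp only [List.length_append, List.length_replicate, List.length_cons,
            List.length_drop, List.Vector.toList_length]
          omega
        set z1 : List.Vector (Fin 3) n := ⟨List.replicate m k ++ a :: x.toList.drop (m+1), hlen⟩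
          with hz1
        set z2 : List.Vector (Fin 3) n := ⟨List.replicate m k ++ b :: x.toList.drop (m+1), hlen'⟩
          with hz2
        have hz1l : z1.toList = List.replicate m k ++ a :: x.toList.drop (m+1) := rfl
        have hz2l : z2.toList = List.replicate m k ++ b :: x.toList.drop (m+1) := rfl
        have hdz1 : z1.toList.drop m = a :: x.toList.drop (m+1) := by
          rw [hz1l, List.drop_left' (List.length_replicate (n := m) (a := k))]
        have hdz2 : z2.toList.drop m = b :: x.toList.drop (m+1) := by
          rw [hz2l, List.drop_left' (List.length_replicate (n := m) (a := k))]
        obtain ⟨p1, hp1⟩ := ih x z1 (by rw [hdz1, hdx])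
        obtain ⟨p2, hp2⟩ := ih z2 y (by rw [hdz2, hdy, htail])
        have hadj : (hanoiGraph n).Adj z1 z2 := by
          refine ⟨?_, hanoiMove a b, ?_, Or.inl ?_⟩
          · intro hzz
            apply hab
            have := congrArg (fun v : List.Vector (Fin 3) n => v.toList.drop m) hzz
            simp only [hdz1, hdz2] at this
            exact (List.cons_eq_cons.mp this).1
          · rcases hanoiMove_cases a b hab with hc | hc | hc <;> rw [hc] <;> simp
          · rw [hz1l, hz2l, hanoiMove_rep a b hab]
        refine ⟨p1.append (SimpleGraph.Walk.cons hadj p2), ?_⟩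
        rw [SimpleGraph.Walk.length_append, SimpleGraph.Walk.length_cons, pow_succ]
        omega

lemma hanoi_conn (n : ℕ) (x y : List.Vector (Fin 3) n) :
    ∃ p : (hanoiGraph n).Walk x y, p.length ≤ 2 ^ n - 1 :=
  hanoi_walk n n x y (by
    rw [List.drop_eq_nil_of_le (by simp), List.drop_eq_nil_of_le (by simp)])

lemma hanoi_dist_le (n : ℕ) (x y : List.Vector (Fin 3) n) :
    (hanoiGraph n).dist x y ≤ 2 ^ n - 1 := by
  obtain ⟨p, hp⟩ := hanoi_conn n x y
  exact le_trans (SimpleGraph.dist_le p) hp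

lemma hF_dist {n : ℕ} (q : Fin 3) (x y : List.Vector (Fin 3) n) :
    hG q x.toList.reverse ≤ hG q y.toList.reverse + (hanoiGraph n).dist x y := by
  have hr : (hanoiGraph n).Reachable x y := ⟨(hanoi_conn n x y).choose⟩
  obtain ⟨p, hp⟩ := hr.exists_walk_length_eq_dist
  rw [← hp]
  exact hF_walk q p
lemma thd_sub : ∀ c t q : Fin 3, thd (c - t) (c - q) = c - thd t q := by decide

lemma hG_map (c : Fin 3) (w : List (Fin 3)) : ∀ q,
    hG (c - q) (w.map (fun x => c - x)) = hG q w := by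
  induction w with
  | nil => intro q; rfl
  | cons t w ih =>
    intro q
    simp only [List.map_cons, hG, List.length_map]
    by_cases h : t = q
    · rw [if_pos (by rw [h]), if_pos h, ih]
    · rw [if_neg (fun hh => h (sub_right_inj.mp hh)), if_neg h, thd_sub, ih]

lemma vec_map_invol {m : ℕ} (c : Fin 3) (u : List.Vector (Fin 3) m) :
    (u.map (fun x => c - x)).map (fun x => c - x) = u := by
  apply List.Vector.eq
  simp only [List.Vector.toList_map, List.map_map]
  exact List.map_congr_left (fun a _ => sub_sub_cancel c a) |>.trans (List.map_id u.toList)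

lemma count_symm {m : ℕ} (p r : Fin 3) (P : ℕ → Prop) [DecidablePred P] :
    (Finset.univ.filter (fun u : List.Vector (Fin 3) m => P (hG r u.toList))).card =
    (Finset.univ.filter (fun u : List.Vector (Fin 3) m => P (hG p u.toList))).card := by
  refine Finset.card_bij' (fun u _ => u.map (fun x => (p + r) - x))
    (fun u _ => u.map (fun x => (p + r) - x)) ?_ ?_
    (fun u _ => vec_map_invol _ u) (fun u _ => vec_map_invol _ u)
  · intro u hu
    simp only [Finset.mem_filter, Finset.mem_univ, true_and] at hu ⊢
    have h2 := hG_map (p + r) u.toList r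
    rw [add_sub_cancel_right] at h2
    rwa [List.Vector.toList_map, h2]
  · intro u hu
    simp only [Finset.mem_filter, Finset.mem_univ, true_and] at hu ⊢
    have h2 := hG_map (p + r) u.toList p
    rw [add_sub_cancel_left] at h2
    rwa [List.Vector.toList_map, h2]

def phi : Fin 3 → List Bool → List (Fin 3)
  | _, [] => []
  | q, b :: bs => (if b then q+1 else q+2) :: phi (thd (if b then q+1 else q+2) q) bs

lemma phi_length : ∀ (bs : List Bool) (q : Fin 3), (phi q bs).length = bs.length := by
  intro bs
  induction bs with
  | nil => intro q; rfl
  | cons b bs ih => intro q; simp only [phi, List.length_cons, ih]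

lemma succ_ne (q : Fin 3) : q + 1 ≠ q ∧ q + 2 ≠ q ∧ q + 1 ≠ q + 2 := by revert q; decide

lemma phi_max : ∀ (bs : List Bool) (q : Fin 3), hG q (phi q bs) = 2 ^ bs.length - 1 := by
  intro bs
  induction bs with
  | nil => intro q; rfl
  | cons b bs ih =>
    intro q
    have hne : (if b then q+1 else q+2) ≠ q := by
      cases b <;> simp [(succ_ne q).1, (succ_ne q).2.1]
    simp only [phi, hG, if_neg hne, phi_length, List.length_cons, ih]
    have : (1:ℕ) ≤ 2 ^ bs.length := Nat.one_le_two_pow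
    rw [pow_succ]
    omega

lemma phi_inj : ∀ (bs bs' : List Bool) (q : Fin 3), phi q bs = phi q bs' → bs = bs' := by
  intro bs
  induction bs with
  | nil => intro bs' q h; cases bs' with
    | nil => rfl
    | cons b bs' => exact absurd h (by simp [phi])
  | cons b bs ih =>
    intro bs' q h
    cases bs' with
    | nil => exact absurd h (by simp [phi])
    | cons b' bs' =>
      simp only [phi, List.cons_eq_cons] at h
      have hne : q + 1 ≠ q + 2 := (succ_ne q).2.2
      have hne2 : q + 2 ≠ q + 1 := hne.symm
      have hb : b = b' := by
        cases b <;> cases b' <;> simp_all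
      subst hb
      exact congrArg (b :: ·) (ih bs' _ h.2)

lemma count_max {m : ℕ} (q : Fin 3) :
    2 ^ m ≤ (Finset.univ.filter
      (fun u : List.Vector (Fin 3) m => hG q u.toList = 2 ^ m - 1)).card := by
  have hcard : (Finset.univ : Finset (List.Vector Bool m)).card = 2 ^ m := by
    rw [Finset.card_univ, card_vector, Fintype.card_bool]
  refine le_trans (le_of_eq hcard.symm) (Finset.card_le_card_of_injOn
    (fun bs => ⟨phi q bs.toList, by rw [phi_length, List.Vector.toList_length]⟩) ?_ ?_)
  · intro bs _
    simp only [Finset.coe_filter, Set.mem_setOf_eq, Finset.mem_filter, Finset.mem_univ, true_and]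
    show hG q (phi q bs.toList) = 2 ^ m - 1
    rw [phi_max, List.Vector.toList_length]
  · intro b1 _ b2 _ hb
    have : phi q b1.toList = phi q b2.toList := congrArg List.Vector.toList hb
    exact List.Vector.eq _ _ (phi_inj _ _ _ this)
lemma cons_headI {α} [Inhabited α] (l : List α) (h : l ≠ []) : l = l.headI :: l.tail := by
  cases l with
  | nil => exact absurd rfl h
  | cons a l => rfl

lemma small_diam_card (m : ℕ) (A : Finset (List.Vector (Fin 3) (m+1)))
    (hd : ∀ x ∈ A, ∀ y ∈ A, (hanoiGraph (m+1)).dist x y ≤ 2 ^ m - 1) :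
    A.card ≤ 2 * 3 ^ m - 2 ^ m := by
  classical
  have h2m : (1:ℕ) ≤ 2 ^ m := Nat.one_le_two_pow
  have h23 : (2:ℕ) ^ m ≤ 3 ^ m := Nat.pow_le_pow_left (by norm_num) m
  rcases A.eq_empty_or_nonempty with rfl | hne
  · simp
  have hrevne : ∀ x : List.Vector (Fin 3) (m+1), x.toList.reverse ≠ [] := by
    intro x h
    have : x.toList.reverse.length = m + 1 := by simp
    rw [h] at this
    simp at this
  have hρlen : ∀ x : List.Vector (Fin 3) (m+1), x.toList.reverse.tail.length = m := by
    intro x; simp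
  set lst : List.Vector (Fin 3) (m+1) → Fin 3 := fun x => x.toList.reverse.headI with hlst
  set ρ : List.Vector (Fin 3) (m+1) → List.Vector (Fin 3) m :=
    fun x => ⟨x.toList.reverse.tail, hρlen x⟩ with hρ
  have hsplit : ∀ x, x.toList.reverse = lst x :: (ρ x).toList :=
    fun x => cons_headI _ (hrevne x)
  have hρlist : ∀ x, (ρ x).toList.length = m := fun x => (ρ x).toList_length
  obtain ⟨v₀, hv₀⟩ := id hne
  obtain ⟨p, hpv⟩ : ∃ p, lst v₀ = p := ⟨_, rfl⟩
  have hFv₀ : hG p v₀.toList.reverse ≤ 2 ^ m - 1 := by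
    rw [hsplit v₀, hpv, hG, if_pos rfl]
    have := hG_lt (ρ v₀).toList p
    rw [hρlist] at this
    omega
  obtain ⟨xm, hxmA, hxmin⟩ := A.exists_min_image (fun x => hG p x.toList.reverse) hne
  set L := hG p xm.toList.reverse with hLdef
  have hL : L ≤ 2 ^ m - 1 := le_trans (hxmin v₀ hv₀) hFv₀
  have hub : ∀ x ∈ A, hG p x.toList.reverse ≤ L + (2 ^ m - 1) := by
    intro x hx
    exact le_trans (hF_dist p x xm) (by have := hd x hx xm hxmA; omega)
  set S := Finset.univ.filter (fun u : List.Vector (Fin 3) m => L ≤ hG p u.toList) with hS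
  have hX : 2 ^ m ≤ S.card := by
    refine le_trans (count_max p) (Finset.card_le_card ?_)
    intro u hu
    simp only [hS, Finset.mem_filter, Finset.mem_univ, true_and] at hu ⊢
    omega
  have huniv : (Finset.univ : Finset (List.Vector (Fin 3) m)).card = 3 ^ m := by
    rw [Finset.card_univ, card_vector, Fintype.card_fin]
  have hScard : S.card ≤ 3 ^ m := le_trans (Finset.card_le_card (Finset.filter_subset _ _))
    (le_of_eq huniv)
  have hinj : ∀ t : Fin 3, Set.InjOn ρ (A.filter (fun x => lst x = t) : Finset _) := by
    intro t x hx y hy hxy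
    simp only [Finset.coe_filter, Set.mem_setOf_eq] at hx hy
    apply List.Vector.eq
    have hrx := hsplit x
    have hry := hsplit y
    rw [hx.2] at hrx
    rw [hy.2] at hry
    have : x.toList.reverse = y.toList.reverse := by rw [hrx, hry, hxy]
    exact List.reverse_injective this
  have hfib : ∀ t : Fin 3, (A.filter (fun x => lst x = t)).card ≤
      if t = p then S.card else 3 ^ m - S.card := by
    intro t
    by_cases htp : t = p
    · subst htp
      rw [if_pos rfl]
      refine Finset.card_le_card_of_injOn ρ ?_ (hinj t)
      intro x hx
      simp only [Finset.mem_coe, Finset.mem_filter] at hx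
      simp only [hS, Finset.mem_coe, Finset.mem_filter, Finset.mem_univ, true_and]
      have hlow := hxmin x hx.1
      rw [hsplit x, hx.2, hG, if_pos rfl] at hlow
      exact hlow
    · rw [if_neg htp]
      have hTcard : (Finset.univ.filter
          (fun u : List.Vector (Fin 3) m => ¬ L ≤ hG (thd t p) u.toList)).card
          = 3 ^ m - S.card := by
        rw [count_symm p (thd t p) (fun v => ¬ L ≤ v)]
        have h2 := Finset.card_filter_add_card_filter_not (s := Finset.univ)
          (p := fun u : List.Vector (Fin 3) m => L ≤ hG p u.toList)
        rw [huniv] at h2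
        rw [hS]
        omega
      refine le_trans (Finset.card_le_card_of_injOn ρ ?_ (hinj t)) (le_of_eq hTcard)
      intro x hx
      simp only [Finset.mem_coe, Finset.mem_filter] at hx
      simp only [Finset.mem_coe, Finset.mem_filter, Finset.mem_univ, true_and]
      have hup := hub x hx.1
      rw [hsplit x, hx.2, hG, if_neg htp, hρlist] at hup
      omega
  have hpart := Finset.card_eq_sum_card_fiberwise
    (s := A) (t := Finset.univ) (f := lst) (fun x _ => Finset.mem_univ _)
  rw [hpart]
  refine le_trans (Finset.sum_le_sum (fun t _ => hfib t)) ?_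
  rw [Fin.sum_univ_three]
  fin_cases p <;> simp only [Fin.ext_iff, Fin.val_zero, Fin.val_one, Fin.val_two] <;> norm_num <;> omega

/-- Theorem 10: the Hanoi Schreier graphs `Γ_n` satisfy `ρ_{2/3}(Γ_n) ≥ 1/2`:
every `A ⊆ V_n` with `3|A| ≥ 2·3^n = 2|V_n|` has `2·δ(A) ≥ δ(Γ_n)`. -/
theorem statement_13 (n : ℕ) (hn : 1 ≤ n)
    (A : Finset (List.Vector (Fin 3) n)) (hA : 2 * 3 ^ n ≤ 3 * A.card) :
    Finset.univ.sup
        (fun pq : List.Vector (Fin 3) n × List.Vector (Fin 3) n =>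
          (hanoiGraph n).dist pq.1 pq.2) ≤
      2 * (A ×ˢ A).sup
        (fun pq : List.Vector (Fin 3) n × List.Vector (Fin 3) n =>
          (hanoiGraph n).dist pq.1 pq.2) := by
  classical
  obtain ⟨m, rfl⟩ : ∃ m, n = m + 1 := ⟨n - 1, by omega⟩
  have h2m : (1:ℕ) ≤ 2 ^ m := Nat.one_le_two_pow
  have h23 : (2:ℕ) ^ m ≤ 3 ^ m := Nat.pow_le_pow_left (by norm_num) m
  by_cases hex : ∃ x ∈ A, ∃ y ∈ A, 2 ^ m ≤ (hanoiGraph (m+1)).dist x y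
  · obtain ⟨x, hx, y, hy, hxy⟩ := hex
    have hsup : 2 ^ m ≤ (A ×ˢ A).sup
        (fun pq : List.Vector (Fin 3) (m+1) × List.Vector (Fin 3) (m+1) =>
          (hanoiGraph (m+1)).dist pq.1 pq.2) :=
      le_trans hxy (Finset.le_sup (f := fun pq : List.Vector (Fin 3) (m+1) ×
        List.Vector (Fin 3) (m+1) => (hanoiGraph (m+1)).dist pq.1 pq.2)
        (b := (x, y)) (Finset.mem_product.mpr ⟨hx, hy⟩))
    have hdiam : Finset.univ.sup
        (fun pq : List.Vector (Fin 3) (m+1) × List.Vector (Fin 3) (m+1) =>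
          (hanoiGraph (m+1)).dist pq.1 pq.2) ≤ 2 ^ (m+1) - 1 :=
      Finset.sup_le (fun pq _ => hanoi_dist_le (m+1) pq.1 pq.2)
    have hp : (2:ℕ) ^ (m+1) = 2 * 2 ^ m := by ring
    omega
  · exfalso
    push_neg at hex
    have hd : ∀ x ∈ A, ∀ y ∈ A, (hanoiGraph (m+1)).dist x y ≤ 2 ^ m - 1 := by
      intro x hx y hy
      have := hex x hx y hy
      omega
    have hcard := small_diam_card m A hd
    have h3 : (3:ℕ) ^ (m+1) = 3 * 3 ^ m := by ring
    omega
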